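/- arXiv:1809.09363 — 2 statements merged into one kernel-verified Lean document; each statement's English description precedes it below -/
import Mathlib

section
/- Let b ∈ ℝ³ with b ≠ 0, let α > 0, and let μ ∈ ℝ³ with ‖μ‖ = 1. Then -μ×b - α μ×(μ×b) = 0 if and only if μ = b/‖b‖ or μ = -b/‖b‖. That is, the equilibrium points of the Landau–Lifshitz equation on the unit sphere are exactly ±b/‖b‖. -/
/-- The cross product on `EuclideanSpace ℝ (Fin 3)`. -/
noncomputable def cross (u v : EuclideanSpace ℝ (Fin 3)) : EuclideanSpace ℝ (Fin 3) :=
  (WithLp.equiv 2 (Fin 3 → ℝ)).symm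
    (crossProduct ((WithLp.equiv 2 (Fin 3 → ℝ)) u) ((WithLp.equiv 2 (Fin 3 → ℝ)) v))

open Matrix
open scoped RealInnerProductSpace

lemma inner_eq_dot (u v : EuclideanSpace ℝ (Fin 3)) :
    ⟪u, v⟫ = (WithLp.equiv 2 (Fin 3 → ℝ) u) ⬝ᵥ (WithLp.equiv 2 (Fin 3 → ℝ) v) := by
  simp [PiLp.inner_apply, dotProduct, RCLike.inner_apply, mul_comm]

lemma cross_smul_left (c : ℝ) (u v : EuclideanSpace ℝ (Fin 3)) :
    cross (c • u) v = c • cross u v := by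
  simp [cross, WithLp.ofLp_smul, WithLp.toLp_smul, LinearMap.map_smul]

lemma cross_neg_left (u v : EuclideanSpace ℝ (Fin 3)) :
    cross (-u) v = -cross u v := by
  have h := cross_smul_left (-1) u v
  simpa using h

lemma cross_self' (u : EuclideanSpace ℝ (Fin 3)) : cross u u = 0 := by
  simp [cross, cross_self]

lemma cross_zero_right (u : EuclideanSpace ℝ (Fin 3)) : cross u 0 = 0 := by
  simp [cross]

/-- the equilibrium points of the Landau–Lifshitz equation on the
unit sphere are exactly `±b/‖b‖`. -/
theorem landau_lifshitz_equilibria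
    (b : EuclideanSpace ℝ (Fin 3)) (hb : b ≠ 0) (α : ℝ) (hα : 0 < α)
    (μ : EuclideanSpace ℝ (Fin 3)) (hμ : ‖μ‖ = 1) :
    -(cross μ b) - α • cross μ (cross μ b) = 0 ↔
      μ = ‖b‖⁻¹ • b ∨ μ = -(‖b‖⁻¹ • b) := by
  have hbn : ‖b‖ ≠ 0 := norm_ne_zero_iff.mpr hb
  constructor
  · intro h
    -- inner with cross μ b
    have hperp : ⟪cross μ b, cross μ (cross μ b)⟫ = 0 := by
      rw [inner_eq_dot]
      simp only [cross, Equiv.apply_symm_apply]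
      exact dot_cross_self _ _
    have h1 : ⟪cross μ b, -(cross μ b) - α • cross μ (cross μ b)⟫ = 0 := by
      rw [h, inner_zero_right]
    rw [inner_sub_right, inner_neg_right, inner_smul_right, hperp,
      real_inner_self_eq_norm_sq] at h1
    have hcz : cross μ b = 0 := by
      have h2 : ‖cross μ b‖ ^ 2 = 0 := by linarith
      have h3 : ‖cross μ b‖ = 0 := by
        nlinarith [norm_nonneg (cross μ b)]
      exact norm_eq_zero.mp h3
    -- Lagrange identity
    have hlag : 0 = ⟪μ, μ⟫ * ⟪b, b⟫ - ⟪μ, b⟫ * ⟪μ, b⟫ := by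
      have := cross_dot_cross (WithLp.equiv 2 (Fin 3 → ℝ) μ) (WithLp.equiv 2 (Fin 3 → ℝ) b)
        (WithLp.equiv 2 (Fin 3 → ℝ) μ) (WithLp.equiv 2 (Fin 3 → ℝ) b)
      have hz : (WithLp.equiv 2 (Fin 3 → ℝ) μ) ⨯₃ (WithLp.equiv 2 (Fin 3 → ℝ) b) = 0 := by
        have : WithLp.equiv 2 (Fin 3 → ℝ) (cross μ b) = WithLp.equiv 2 (Fin 3 → ℝ) 0 := by
          rw [hcz]
        simpa [cross, Equiv.apply_symm_apply] using this
      rw [hz] at this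
      simp only [zero_dotProduct] at this
      rw [inner_eq_dot, inner_eq_dot, inner_eq_dot]
      rw [dotProduct_comm ((WithLp.equiv 2 (Fin 3 → ℝ)) b) ((WithLp.equiv 2 (Fin 3 → ℝ)) μ)] at this
      linarith
    rw [real_inner_self_eq_norm_sq, real_inner_self_eq_norm_sq, hμ] at hlag
    have hsq : ⟪μ, b⟫ ^ 2 = ‖b‖ ^ 2 := by ring_nf; ring_nf at hlag; linarith
    have hcases : ⟪μ, b⟫ = ‖b‖ ∨ ⟪μ, b⟫ = -‖b‖ := by
      rcases sq_eq_sq_iff_eq_or_eq_neg.mp hsq with h' | h'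
      · exact Or.inl h'
      · exact Or.inr h'
    rcases hcases with hc | hc
    · left
      have : ‖b‖ • μ = ‖μ‖ • b := inner_eq_norm_mul_iff_real.mp (by rw [hc, hμ, one_mul])
      rw [hμ, one_smul] at this
      have h4 := congrArg (fun x => ‖b‖⁻¹ • x) this
      simpa [smul_smul, inv_mul_cancel₀ hbn] using h4
    · right
      have hc' : ⟪μ, -b⟫ = ‖μ‖ * ‖-b‖ := by
        rw [inner_neg_right, hc, hμ, norm_neg, one_mul, neg_neg]
      have : ‖-b‖ • μ = ‖μ‖ • (-b) := inner_eq_norm_mul_iff_real.mp hc'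
      rw [hμ, one_smul, norm_neg] at this
      have h4 := congrArg (fun x => ‖b‖⁻¹ • x) this
      simp only [smul_smul, inv_mul_cancel₀ hbn, one_smul, smul_neg] at h4
      rw [h4]
  · rintro (h | h)
    · have : cross μ b = 0 := by
        rw [h, cross_smul_left]
        have : cross b b = 0 := cross_self' b
        rw [this, smul_zero]
      rw [this, cross_zero_right, smul_zero, neg_zero, sub_zero]
    · have : cross μ b = 0 := by
        rw [h, cross_neg_left, cross_smul_left, cross_self' b, smul_zero, neg_zero]
      rw [this, cross_zero_right, smul_zero, neg_zero, sub_zero]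
end

section
/- Let α, ε ∈ ℝ and let x ∈ ℝ³ with ‖x‖ = 1. Denote by (e₁, e₂, e₃) the standard basis of ℝ³ and define the linear map σ(x) : ℝ³ → ℝ³ by σ(x)v = ε·(-x×v - α x×(x×v)). Then the squared Frobenius norm of σ(x) equals 2ε²(α² + 1), i.e. Σ_{i=1}^{3} ‖σ(x)eᵢ‖² = 2ε²(α² + 1). (This is the algebraic identity underlying the fact that for the Itô stochastic Landau–Lifshitz equation one has d(‖y_t‖²) = 2ε²(α²+1)dt, so that H(t) = 1 + 2ε²(α²+1)t in the invariantization.) -/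
/-- the squared Frobenius norm of the Landau–Lifshitz diffusion map
`σ(x)v = ε(-x×v - α x×(x×v))` at a point `x` of the unit sphere equals `2ε²(α²+1)`. -/
theorem landau_lifshitz_frobenius_norm
    (α ε : ℝ) (x : EuclideanSpace ℝ (Fin 3)) (hx : ‖x‖ = 1) :
    ∑ i : Fin 3,
      ‖ε • (-(cross x (EuclideanSpace.single i 1))
        - α • cross x (cross x (EuclideanSpace.single i 1)))‖ ^ 2
      = 2 * ε ^ 2 * (α ^ 2 + 1) := by
  have key : ∀ v : EuclideanSpace ℝ (Fin 3), ‖v‖^2 = (v 0)^2 + (v 1)^2 + (v 2)^2 := by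
    intro v
    rw [EuclideanSpace.norm_eq, Real.sq_sqrt (by positivity), Fin.sum_univ_three]
    simp [sq_abs]
  have hx2 : (x 0)^2 + (x 1)^2 + (x 2)^2 = 1 := by
    rw [← key x, hx]; norm_num
  simp only [Fin.sum_univ_three, key, cross, crossProduct]
  simp [Fin.sum_univ_three, EuclideanSpace.single_apply]
  linear_combination (2*ε^2*α^2*((x 0)^2+(x 1)^2+(x 2)^2+1) + 2*ε^2) * hx2
end
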